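/- For any connected graph G of order n containing a cycle, γ_{StR}(G) ≤ n − ⌊g(G)/3⌋, where g(G) is the girth (length of a shortest cycle) of G. -/

import Mathlib

namespace SimpleGraph

variable {V : Type*}

/-- The degree of a vertex (cardinality of its open neighborhood). -/
noncomputable def deg (G : SimpleGraph V) (v : V) : ℕ := (G.neighborSet v).ncard

/-- Maximum degree. -/
noncomputable def maxDeg [Fintype V] (G : SimpleGraph V) : ℕ :=
  Finset.univ.sup fun v => G.deg v

/-- A strong Roman dominating function: `f : V → {0,1,...,⌈Δ/2⌉+1}` such that every vertex
with value 0 has a neighbor `w` with `f w ≥ 2` and `f w ≥ 1 + ⌈|N(w) ∩ B₀|/2⌉`. -/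
def IsStRDF [Fintype V] (G : SimpleGraph V) (f : V → ℕ) : Prop :=
  (∀ v, f v ≤ (G.maxDeg + 1) / 2 + 1) ∧
  ∀ v, f v = 0 → ∃ w, G.Adj v w ∧ 2 ≤ f w ∧
    1 + ((G.neighborSet w ∩ {u | f u = 0}).ncard + 1) / 2 ≤ f w

/-- The strong Roman domination number. -/
noncomputable def gammaStR [Fintype V] (G : SimpleGraph V) : ℕ :=
  sInf {k | ∃ f, G.IsStRDF f ∧ ∑ v, f v = k}

/-- A Roman dominating function. -/
def IsRDF (G : SimpleGraph V) (f : V → ℕ) : Prop :=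
  (∀ v, f v ≤ 2) ∧ ∀ v, f v = 0 → ∃ w, G.Adj v w ∧ f w = 2

/-- The Roman domination number. -/
noncomputable def gammaR [Fintype V] (G : SimpleGraph V) : ℕ :=
  sInf {k | ∃ f, G.IsRDF f ∧ ∑ v, f v = k}

/-- A dominating set. -/
def IsDomSet (G : SimpleGraph V) (D : Set V) : Prop :=
  ∀ v ∉ D, ∃ w ∈ D, G.Adj v w

/-- The domination number. -/
noncomputable def gammaDom [Fintype V] (G : SimpleGraph V) : ℕ :=
  sInf {k | ∃ D : Set V, G.IsDomSet D ∧ D.ncard = k}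

end SimpleGraph


namespace SimpleGraph
variable {V : Type*} {G : SimpleGraph V}

lemma my_egirth_le {a : V} {w : G.Walk a a} (hw : w.IsCycle) : G.egirth ≤ (w.length : ℕ∞) := by
  unfold egirth
  exact (iInf_le _ a).trans ((iInf_le _ w).trans (iInf_le _ hw))

lemma my_girth_le_length {a : V} {w : G.Walk a a} (hw : w.IsCycle) :
    G.girth ≤ w.length := by
  have := ENat.toNat_le_toNat (my_egirth_le hw) (by simp)
  simpa [girth] using this

lemma my_edge_first {u x v : V} (p : G.Walk u x) (hp : p.IsPath) (he : s(u,v) ∈ p.edges) :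
    v = p.getVert 1 := by
  cases p with
  | nil => simp at he
  | cons h' p' =>
    rw [Walk.cons_isPath_iff] at hp
    rw [Walk.edges_cons, List.mem_cons] at he
    rcases he with he | he
    · rw [Sym2.congr_right] at he
      subst he
      simp [Walk.getVert_cons_succ, Walk.getVert_zero]
    · exact absurd (Walk.fst_mem_support_of_mem_edges p' he) hp.2

lemma my_cycle_edge {u v : V} (c : G.Walk u u) (hc : c.IsCycle) (he : s(u,v) ∈ c.edges) :
    v = c.getVert 1 ∨ v = c.reverse.getVert 1 := by
  cases c with
  | nil => simp at he
  | cons h' p' =>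
    have hp' : p'.IsPath := by
      have := hc.2
      rw [Walk.isPath_def]
      simpa using this
    rw [Walk.edges_cons, List.mem_cons] at he
    rcases he with he | he
    · rw [Sym2.congr_right] at he
      subst he
      left; simp [Walk.getVert_cons_succ, Walk.getVert_zero]
    · right
      have he' : s(u, v) ∈ p'.reverse.edges := by
        rw [Walk.edges_reverse, List.mem_reverse]; exact he
      have := my_edge_first p'.reverse hp'.reverse he'
      rw [Walk.reverse_cons, Walk.getVert_append]
      have hlen : 3 ≤ (Walk.cons h' p').length := hc.three_le_length
      simp only [Walk.length_cons] at hlen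
      rw [if_pos (by rw [Walk.length_reverse]; omega)]
      exact this

lemma my_chordless {u v : V} (c : G.Walk u u) (hc : c.IsCycle) (hlen : c.length = G.girth)
    (hv : v ∈ c.support) (hadj : G.Adj u v) : s(u,v) ∈ c.edges := by
  classical
  by_contra hne
  have hvu : v ≠ u := hadj.ne'
  set p := c.takeUntil v hv with hp
  set q := c.dropUntil v hv with hq
  have hspec : p.append q = c := c.take_spec hv
  have hsupp : c.support.tail = p.support.tail ++ q.support.tail := by
    rw [← hspec, Walk.tail_support_append]
  have hnodup := hc.2
  rw [hsupp, List.nodup_append] at hnodup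
  have hplen : p.length ≠ 0 := fun h => hvu (Walk.eq_of_length_eq_zero h).symm
  have hqlen : q.length ≠ 0 := fun h => hvu (Walk.eq_of_length_eq_zero h)
  have hptail : p.support.tail ≠ [] := by
    apply List.ne_nil_of_length_pos
    rw [List.length_tail, p.length_support]
    omega
  have hqtail : q.support.tail ≠ [] := by
    apply List.ne_nil_of_length_pos
    rw [List.length_tail, q.length_support]
    omega
  have hvp : v ∈ p.support.tail := by
    have h1 : p.support.tail.getLast hptail = v := by
      rw [List.getLast_tail, p.getLast_support]
    have := List.getLast_mem hptail
    rwa [h1] at this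
  have huq : u ∈ q.support.tail := by
    have h1 : q.support.tail.getLast hqtail = u := by
      rw [List.getLast_tail, q.getLast_support]
    have := List.getLast_mem hqtail
    rwa [h1] at this
  have hppath : p.IsPath := by
    rw [Walk.isPath_def, p.support_eq_cons, List.nodup_cons]
    exact ⟨fun h => hnodup.2.2 _ h _ huq rfl, hnodup.1⟩
  have hqpath : q.IsPath := by
    rw [Walk.isPath_def, q.support_eq_cons, List.nodup_cons]
    exact ⟨fun h => hnodup.2.2 _ hvp _ h rfl, hnodup.2.1⟩
  have hedges : c.edges = p.edges ++ q.edges := by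
    rw [← hspec, Walk.edges_append]
  rw [hedges, List.mem_append] at hne
  push_neg at hne
  have hcyc1 : (Walk.cons hadj.symm p).IsCycle := by
    rw [Walk.cons_isCycle_iff]
    exact ⟨hppath, by rw [Sym2.eq_swap]; exact hne.1⟩
  have hcyc2 : (Walk.cons hadj q).IsCycle := by
    rw [Walk.cons_isCycle_iff]
    exact ⟨hqpath, hne.2⟩
  have hg1 : G.girth ≤ p.length + 1 := by simpa using my_girth_le_length hcyc1
  have hg2 : G.girth ≤ q.length + 1 := by simpa using my_girth_le_length hcyc2
  have hsum : p.length + q.length = G.girth := by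
    rw [← hlen, ← hspec, Walk.length_append]
  have hg3 : 3 ≤ G.girth := three_le_girth (fun ha => ha _ hc)
  omega

lemma my_mem_support_tail {a x : V} (c : G.Walk a a) (hnil : ¬c.Nil) (hx : x ∈ c.support) :
    x ∈ c.support.tail := by
  have htail : c.support.tail ≠ [] := by
    apply List.ne_nil_of_length_pos
    rw [List.length_tail, c.length_support]
    rw [Walk.nil_iff_length_eq] at hnil
    omega
  rw [c.support_eq_cons, List.mem_cons] at hx
  rcases hx with rfl | hx
  · have h1 : c.support.tail.getLast htail = x := by
      rw [List.getLast_tail, c.getLast_support]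
    have := List.getLast_mem htail
    rwa [h1] at this
  · exact hx

lemma my_nbr_pair {a : V} (c : G.Walk a a) (hc : c.IsCycle) (hlen : c.length = G.girth)
    {w : V} (hw : w ∈ c.support) :
    ∃ x y : V, ∀ u, G.Adj w u → u ∈ c.support → u = x ∨ u = y := by
  classical
  set d := c.rotate w hw with hd
  have hdc : d.IsCycle := hc.rotate hw
  have hdlen : d.length = c.length := by
    have := (c.rotate_darts w hw).perm.length_eq
    rwa [Walk.length_darts, Walk.length_darts] at this
  refine ⟨d.getVert 1, d.reverse.getVert 1, fun u hadj hu => ?_⟩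
  have hud : u ∈ d.support := by
    have h1 : u ∈ c.support.tail := my_mem_support_tail c hc.not_nil hu
    have h2 := (c.support_rotate w hw).mem_iff.mpr h1
    exact List.mem_of_mem_tail h2
  exact my_cycle_edge d hdc (my_chordless d hdc (hdlen.trans hlen) hud hadj)

lemma my_sum_pattern (q : ℕ) :
    ∑ i ∈ Finset.range (3*q), (if i % 3 = 1 then 2 else 0) = 2*q := by
  induction q with
  | zero => simp
  | succ k ih =>
    have h3 : 3*(k+1) = (3*k + 1) + 1 + 1 := by ring
    rw [h3, Finset.sum_range_succ, Finset.sum_range_succ, Finset.sum_range_succ, ih]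
    have h1 : (3*k+1) % 3 = 1 := by omega
    rw [if_neg (by omega), if_pos h1, if_neg (by omega)]
    ring

end SimpleGraph

open SimpleGraph

/-- For any connected graph `G` of order `n` containing a cycle,
`γ_{StR}(G) ≤ n − ⌊g(G)/3⌋`, where `g(G)` is the girth of `G`. -/
theorem stmt5 {V : Type*} [Fintype V] (G : SimpleGraph V) (hc : G.Connected)
    (hg : ¬ G.IsAcyclic) :
    G.gammaStR ≤ Fintype.card V - G.girth / 3 := by
  classical
  obtain ⟨a, c, hcyc, hgl⟩ := exists_girth_eq_length.mpr hg
  set g := G.girth with hgdef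
  set q := g / 3 with hqdef
  have hg3 : 3 ≤ g := three_le_girth hg
  have h3q : 3 * q ≤ g := by omega
  set L := c.support.tail with hLdef
  have hLlen : L.length = g := by
    rw [hLdef, List.length_tail, c.length_support, ← hgl]
    omega
  have hnod : L.Nodup := hcyc.2
  set ℓ : ℕ → V := fun i => L.getD i a with hldef
  have hgetD : ∀ i (hi : i < g), ℓ i = L[i]'(by rw [hLlen]; exact hi) := by
    intro i hi
    exact L.getD_eq_getElem a (by rw [hLlen]; exact hi)
  have hinj : ∀ i j, i < g → j < g → ℓ i = ℓ j → i = j := by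
    intro i j hi hj hij
    rw [hgetD i hi, hgetD j hj] at hij
    exact hnod.getElem_inj_iff.mp hij
  have hmem : ∀ i, i < g → ℓ i ∈ c.support := by
    intro i hi
    rw [hgetD i hi]
    have h1 : L[i]'(by rw [hLlen]; exact hi) ∈ L := List.getElem_mem _
    exact List.mem_of_mem_tail h1
  have hadjc : ∀ i, i + 1 < g → G.Adj (ℓ i) (ℓ (i+1)) := by
    intro i hi
    have hchain := Walk.isChain_adj_support c
    have hcons : c.support = a :: L := c.support_eq_cons
    rw [hcons, List.isChain_iff_getElem] at hchain
    have h2 := hchain (i+1) (by simp [hLlen]; omega)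
    simp only [List.get_eq_getElem, List.getElem_cons_succ] at h2
    rw [hgetD i (by omega), hgetD (i+1) hi]
    exact h2
  -- the function
  set Z : V → Prop := fun v => ∃ i, i < 3*q ∧ i % 3 ≠ 1 ∧ ℓ i = v with hZdef
  set T : V → Prop := fun v => ∃ i, i < 3*q ∧ i % 3 = 1 ∧ ℓ i = v with hTdef
  set f : V → ℕ := fun v => if Z v then 0 else if T v then 2 else 1 with hfdef
  have hfle : ∀ v, f v ≤ 2 := by
    intro v; rw [hfdef]; dsimp only; split_ifs <;> omega
  have hf0 : ∀ v, f v = 0 ↔ Z v := by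
    intro v
    rw [hfdef]; dsimp only; split_ifs with h1 h2 <;> simp [h1]
  have hfZ : ∀ i, i < 3*q → i % 3 ≠ 1 → f (ℓ i) = 0 := by
    intro i hi hm
    exact (hf0 _).mpr ⟨i, hi, hm, rfl⟩
  have hfT : ∀ i, i < 3*q → i % 3 = 1 → f (ℓ i) = 2 := by
    intro i hi hm
    have hnZ : ¬ Z (ℓ i) := by
      rintro ⟨j, hj, hjm, hje⟩
      exact hjm (hinj j i (by omega) (by omega) hje ▸ hm)
    rw [hfdef]; dsimp only
    rw [if_neg hnZ, if_pos ⟨i, hi, hm, rfl⟩]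
  have hmax : 1 ≤ G.maxDeg := by
    have hadj01 : G.Adj (ℓ 0) (ℓ 1) := hadjc 0 (by omega)
    have hdeg : 1 ≤ G.deg (ℓ 0) := by
      rw [deg]
      rw [Nat.one_le_iff_ne_zero, Ne, Set.ncard_eq_zero (Set.toFinite _)]
      intro h
      exact absurd (h ▸ hadj01 : (ℓ 1) ∈ (∅ : Set V)) (Set.notMem_empty _)
    exact hdeg.trans (Finset.le_sup (Finset.mem_univ (ℓ 0)))
  -- IsStRDF
  have hStR : G.IsStRDF f := by
    constructor
    · intro v
      have := hfle v
      have h2 : 2 ≤ (G.maxDeg + 1) / 2 + 1 := by omega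
      omega
    · intro v hv
      obtain ⟨i, hi, him, rfl⟩ := (hf0 v).mp hv
      -- pick the neighbour with value 2
      obtain ⟨j, hj, hjm, hadj⟩ : ∃ j, j < 3*q ∧ j % 3 = 1 ∧ G.Adj (ℓ i) (ℓ j) := by
        rcases Nat.lt_or_ge (i % 3) 1 with h0 | h2
        · exact ⟨i+1, by omega, by omega, hadjc i (by omega)⟩
        · have h2' : i % 3 = 2 := by omega
          refine ⟨i-1, by omega, by omega, ?_⟩
          have := hadjc (i-1) (by omega)
          rw [Nat.sub_add_cancel (by omega)] at this
          exact this.symm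
      refine ⟨ℓ j, hadj, by rw [hfT j hj hjm], ?_⟩
      rw [hfT j hj hjm]
      have hcard : (G.neighborSet (ℓ j) ∩ {u | f u = 0}).ncard ≤ 2 := by
        obtain ⟨x, y, hxy⟩ := my_nbr_pair c hcyc hgl.symm (hmem j (by omega))
        have hsub : (G.neighborSet (ℓ j) ∩ {u | f u = 0}) ⊆ {x, y} := by
          rintro u ⟨hu1, hu2⟩
          obtain ⟨m, hm, hmm, rfl⟩ := (hf0 u).mp hu2
          rcases hxy (ℓ m) hu1 (hmem m (by omega)) with h | h <;> simp [h]
        calc (G.neighborSet (ℓ j) ∩ {u | f u = 0}).ncard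
            ≤ ({x, y} : Set V).ncard := Set.ncard_le_ncard hsub (Set.toFinite _)
          _ ≤ 2 := by
              refine (Set.ncard_insert_le _ _).trans ?_
              simp [Set.ncard_singleton]
      omega
  -- sum bound
  set S : Finset V := (Finset.range (3*q)).image ℓ with hSdef
  have hinjOn : Set.InjOn ℓ (Finset.range (3*q)) := by
    intro i hi j hj hij
    simp only [Finset.coe_range, Set.mem_Iio] at hi hj
    exact hinj i j (by omega) (by omega) hij
  have hScard : S.card = 3*q := by
    rw [hSdef, Finset.card_image_of_injOn hinjOn, Finset.card_range]
  have hgn : g ≤ Fintype.card V := hLlen ▸ hnod.length_le_card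
  have hsum : ∑ v, f v ≤ Fintype.card V - q := by
    have hsplit : ∑ v ∈ S, f v + ∑ v ∈ Sᶜ, f v = ∑ v, f v :=
      Finset.sum_add_sum_compl S f
    have hS : ∑ v ∈ S, f v = 2*q := by
      rw [hSdef, Finset.sum_image hinjOn]
      rw [← my_sum_pattern q]
      apply Finset.sum_congr rfl
      intro i hi
      rw [Finset.mem_range] at hi
      by_cases h1 : i % 3 = 1
      · rw [hfT i hi h1, if_pos h1]
      · rw [hfZ i hi h1, if_neg h1]
    have hSc : ∀ v ∈ Sᶜ, f v ≤ 1 := by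
      intro v hv
      rw [Finset.mem_compl] at hv
      have hnZ : ¬ Z v := by
        rintro ⟨i, hi, _, rfl⟩
        exact hv (Finset.mem_image.mpr ⟨i, Finset.mem_range.mpr hi, rfl⟩)
      have hnT : ¬ T v := by
        rintro ⟨i, hi, _, rfl⟩
        exact hv (Finset.mem_image.mpr ⟨i, Finset.mem_range.mpr hi, rfl⟩)
      rw [hfdef]; dsimp only; rw [if_neg hnZ, if_neg hnT]
    have hScsum : ∑ v ∈ Sᶜ, f v ≤ Sᶜ.card := by
      calc ∑ v ∈ Sᶜ, f v ≤ ∑ _v ∈ Sᶜ, 1 := Finset.sum_le_sum hSc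
        _ = Sᶜ.card := by simp
    have hcc : Sᶜ.card = Fintype.card V - 3*q := by
      rw [Finset.card_compl, hScard]
    omega
  -- conclude
  have hmemset : (∑ v, f v) ∈ {k | ∃ f, G.IsStRDF f ∧ ∑ v, f v = k} := ⟨f, hStR, rfl⟩
  exact (Nat.sInf_le hmemset).trans hsum
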